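/- Let m be a positive integer and let G = D_m = ⟨σ, τ | σ^m = τ^2 = e, στ = τσ^{−1}⟩ be the dihedral group of order 2m. Order G by g_{im+j} = τ^i σ^j (i ∈ {0,1}, 0 ≤ j < m) and specialize f(g_t) = q^t. Let H = ⟨τ⟩ = {e, τ} with rows ordered (e, τ), and let X be the 2×2m matrix over ℂ[q] with (i,j)-entry f(h_i g_j^{−1}). Then wrdet_m(X) = (m!/m^m)^2 · q^{m(m−1)} · (1 − q^{2m})^m. -/

import Mathlib

/-- The number of cycles of a permutation, counting fixed points as cycles. -/
def cycleCount {N : ℕ} (σ : Equiv.Perm (Fin N)) : ℕ :=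
  σ.cycleType.card + (Finset.univ.filter fun x => σ x = x).card

/-- ν(σ) = N − c(σ), where c(σ) is the number of cycles of σ (fixed points counted). -/
def nuPerm {N : ℕ} (σ : Equiv.Perm (Fin N)) : ℕ := N - cycleCount σ

/-- The alpha-determinant of a square matrix over a commutative ℚ-algebra. -/
noncomputable def adet {R : Type*} [CommRing R] [Algebra ℚ R] (α : ℚ) {N : ℕ}
    (X : Matrix (Fin N) (Fin N) R) : R :=
  ∑ σ : Equiv.Perm (Fin N),
    algebraMap ℚ R (α ^ nuPerm σ) * ∏ i, X (σ i) i

/-- The k-wreath determinant of an n × (kn) matrix: wrdet_k(X) = adet_{-1/k}(X ⊗ 1_{k,1}),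
where `X ⊗ 1_{k,1}` is the kn × kn matrix in which each row of `X` is repeated `k`
consecutive times (row `i` of the blowup is row `⌊i/k⌋` of `X`). -/
noncomputable def wrdet {R : Type*} [CommRing R] [Algebra ℚ R] (k : ℕ) {n : ℕ}
    (X : Matrix (Fin n) (Fin (n * k)) R) : R :=
  adet (-(1 : ℚ) / k) (Matrix.of fun i j : Fin (n * k) => X i.divNat j)

/-- The principal specialization of the dihedral group D_m with the standard ordering
g_{im+j} = τ^i σ^j: f(σ^j) = q^j and f(τσ^j) = q^{m+j}. -/
noncomputable def dihedralSpec (m : ℕ) : DihedralGroup m → Polynomial ℂ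
  | .r i => Polynomial.X ^ i.val
  | .sr i => Polynomial.X ^ (m + i.val)

/-- The standard ordering of the dihedral group D_m: g_{im+j} = τ^i σ^j
(i ∈ {0,1}, 0 ≤ j < m), i.e. first the rotations e, σ, …, σ^{m−1},
then the reflections τ, τσ, …, τσ^{m−1}. -/
def dihedralOrd (m : ℕ) : Fin (2 * m) → DihedralGroup m := fun j =>
  if (j : ℕ) < m then DihedralGroup.r ((j : ℕ) : ZMod m)
  else DihedralGroup.sr (((j : ℕ) - m : ℕ) : ZMod m)

section Aux
set_option maxHeartbeats 1000000




open Equiv Finset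

section CycleLemmas

variable {N : ℕ} (σ : Equiv.Perm (Fin N))

lemma card_filter_fixed :
    (Finset.univ.filter fun x => σ x = x).card = N - σ.support.card := by
  have h := Finset.card_filter_add_card_filter_not
    (s := (Finset.univ : Finset (Fin N))) (p := fun x => σ x = x)
  have hs : σ.support.card = (Finset.univ.filter fun x => ¬ σ x = x).card := by
    congr 1
  have hu : (Finset.univ : Finset (Fin N)).card = N := by simp
  omega

lemma card_cycleType_le : σ.cycleType.card ≤ σ.support.card := by
  rw [← Equiv.Perm.sum_cycleType]
  have h : ∀ x ∈ σ.cycleType, 1 ≤ x :=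
    fun x hx => le_trans (by norm_num) (Equiv.Perm.two_le_of_mem_cycleType hx)
  have := Multiset.card_nsmul_le_sum h
  simpa using this

lemma support_card_le : σ.support.card ≤ N := by
  have := Finset.card_le_univ σ.support
  simpa using this

lemma cycleCount_eq : cycleCount σ = σ.cycleType.card + (N - σ.support.card) := by
  rw [cycleCount, card_filter_fixed]

lemma cycleCount_le : cycleCount σ ≤ N := by
  have h1 := card_cycleType_le σ
  have h2 := support_card_le σ
  rw [cycleCount_eq]
  omega

lemma nuPerm_eq : nuPerm σ = σ.support.card - σ.cycleType.card := by
  have h1 := card_cycleType_le σ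
  have h2 := support_card_le σ
  rw [nuPerm, cycleCount_eq]
  omega

lemma sign_cast_eq : ((Equiv.Perm.sign σ : ℤ) : ℚ) = (-1 : ℚ) ^ nuPerm σ := by
  have h1 := card_cycleType_le σ
  have hsum := Equiv.Perm.sum_cycleType σ
  rw [Equiv.Perm.sign_of_cycleType]
  have hexp : σ.cycleType.sum + σ.cycleType.card
      = nuPerm σ + 2 * σ.cycleType.card := by
    rw [nuPerm_eq]
    omega
  rw [hexp]
  push_cast
  rw [pow_add, pow_mul]
  norm_num

end CycleLemmas

open Equiv Finset

section CountInv

variable {N m : ℕ}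

lemma inv_zpow_apply (σ : Equiv.Perm (Fin N)) (κ : Fin N → Fin m)
    (hκ : κ ∘ σ = κ) : ∀ (i : ℤ) (x : Fin N), κ ((σ ^ i) x) = κ x := by
  have hnat : ∀ (n : ℕ) (x : Fin N), κ ((σ ^ n) x) = κ x := by
    intro n
    induction n with
    | zero => intro x; simp
    | succ n ih =>
      intro x
      have : (σ ^ (n + 1)) x = (σ ^ n) (σ x) := by
        rw [pow_succ]
        rfl
      rw [this, ih (σ x)]
      exact congrFun hκ x
  intro i x
  cases i with
  | ofNat n => simpa using hnat n x
  | negSucc n =>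
    rw [zpow_negSucc]
    have := hnat (n + 1) ((σ ^ (n + 1))⁻¹ x)
    rw [Equiv.Perm.coe_inv, Equiv.apply_symm_apply] at this
    exact this.symm

variable (σ : Equiv.Perm (Fin N))

noncomputable def ptOf (c : {c // c ∈ σ.cycleFactorsFinset}) : Fin N :=
  (Equiv.Perm.IsCycle.nonempty_support
    (Equiv.Perm.mem_cycleFactorsFinset_iff.mp c.2).1).choose

lemma ptOf_mem (c : {c // c ∈ σ.cycleFactorsFinset}) :
    ptOf σ c ∈ (c.1).support :=
  (Equiv.Perm.IsCycle.nonempty_support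
    (Equiv.Perm.mem_cycleFactorsFinset_iff.mp c.2).1).choose_spec

lemma ptOf_not_fixed (c : {c // c ∈ σ.cycleFactorsFinset}) :
    σ (ptOf σ c) ≠ ptOf σ c := by
  have h1 := (Equiv.Perm.mem_cycleFactorsFinset_iff.mp c.2).2 (ptOf σ c) (ptOf_mem σ c)
  have h2 := Equiv.Perm.mem_support.mp (ptOf_mem σ c)
  rw [h1] at h2
  exact h2

lemma ptOf_cycleOf (c : {c // c ∈ σ.cycleFactorsFinset}) :
    σ.cycleOf (ptOf σ c) = c.1 :=
  (Equiv.Perm.cycle_is_cycleOf (ptOf_mem σ c) c.2).symm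

variable (m) in
noncomputable def Gmap
    (φ : ({x : Fin N // σ x = x} → Fin m) × ({c // c ∈ σ.cycleFactorsFinset} → Fin m))
    (x : Fin N) : Fin m :=
  if h : σ x = x then φ.1 ⟨x, h⟩ else
    φ.2 ⟨σ.cycleOf x, Equiv.Perm.cycleOf_mem_cycleFactorsFinset_iff.mpr
      (Equiv.Perm.mem_support.mpr h)⟩

lemma Gmap_inv (φ) : (Gmap m σ φ) ∘ σ = Gmap m σ φ := by
  funext x
  by_cases h : σ x = x
  · simp only [Function.comp_apply, h]
  · have h2 : σ (σ x) ≠ σ x := fun e => h (σ.injective e)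
    simp only [Function.comp_apply, Gmap, dif_neg h, dif_neg h2]
    exact congrArg φ.2 (Subtype.ext (Equiv.Perm.cycleOf_self_apply σ x))

lemma card_inv_eq :
    (Finset.univ.filter fun κ : Fin N → Fin m => κ ∘ σ = κ).card = m ^ cycleCount σ := by

  set G : (({x : Fin N // σ x = x} → Fin m) × ({c // c ∈ σ.cycleFactorsFinset} → Fin m)) →
      {κ : Fin N → Fin m // κ ∘ σ = κ} := fun φ => ⟨Gmap m σ φ, Gmap_inv σ φ⟩ with hG
  have hGbij : Function.Bijective G := by
    constructor
    · intro φ ψ h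
      have h' : ∀ x, Gmap m σ φ x = Gmap m σ ψ x := fun x =>
        congrFun (congrArg Subtype.val h) x
      refine Prod.ext ?_ ?_
      · funext x
        have := h' x.1
        simpa only [Gmap, dif_pos x.2] using this
      · funext c
        have hx := h' (ptOf σ c)
        have hns := ptOf_not_fixed σ c
        simp only [Gmap, dif_neg hns] at hx
        have hmemc : σ.cycleOf (ptOf σ c) ∈ σ.cycleFactorsFinset := by
          rw [ptOf_cycleOf σ c]; exact c.2
        have heq : (⟨σ.cycleOf (ptOf σ c), hmemc⟩ : {c // c ∈ σ.cycleFactorsFinset}) = c :=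
          Subtype.ext (ptOf_cycleOf σ c)
        rw [← heq]
        exact hx
    · rintro ⟨κ, hκ⟩
      refine ⟨⟨fun x => κ x.1, fun c => κ (ptOf σ c)⟩, ?_⟩
      apply Subtype.ext
      funext x
      show Gmap m σ _ x = κ x
      by_cases h : σ x = x
      · simp only [Gmap, dif_pos h]
      · simp only [Gmap, dif_neg h]
        have hmem : ptOf σ ⟨σ.cycleOf x, Equiv.Perm.cycleOf_mem_cycleFactorsFinset_iff.mpr
            (Equiv.Perm.mem_support.mpr h)⟩ ∈ (σ.cycleOf x).support :=
          ptOf_mem σ ⟨σ.cycleOf x, Equiv.Perm.cycleOf_mem_cycleFactorsFinset_iff.mpr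
            (Equiv.Perm.mem_support.mpr h)⟩
        have hsc : σ.SameCycle x _ := (Equiv.Perm.mem_support_cycleOf_iff.mp hmem).1
        obtain ⟨i, hi⟩ := hsc
        rw [← hi]
        exact inv_zpow_apply σ κ hκ i x
  have hcard := Fintype.card_of_bijective hGbij
  rw [Fintype.card_prod, Fintype.card_fun, Fintype.card_fun] at hcard
  have hfix : Fintype.card {x : Fin N // σ x = x}
      = (Finset.univ.filter fun x => σ x = x).card := Fintype.card_subtype _
  have hfac : Fintype.card {c // c ∈ σ.cycleFactorsFinset} = σ.cycleType.card := by
    rw [Fintype.card_coe, Equiv.Perm.cycleType_def, Multiset.card_map]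
    rfl
  have hsub : Fintype.card {κ : Fin N → Fin m // κ ∘ σ = κ}
      = (Finset.univ.filter fun κ : Fin N → Fin m => κ ∘ σ = κ).card :=
    Fintype.card_subtype _
  rw [hsub, hfix, hfac, Fintype.card_fin] at hcard
  rw [← hcard, cycleCount, pow_add, mul_comm]

end CountInv



open Equiv Finset Polynomial

noncomputable def Xmat (m : ℕ) : Matrix (Fin 2) (Fin (2 * m)) (Polynomial ℂ) :=
  Matrix.of fun (i : Fin 2) (j : Fin (2 * m)) =>
    dihedralSpec m ((![1, DihedralGroup.sr 0] i) * (dihedralOrd m j)⁻¹)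

noncomputable def Ymat (m : ℕ) : Matrix (Fin (2 * m)) (Fin (2 * m)) (Polynomial ℂ) :=
  Matrix.of fun i j : Fin (2 * m) => Xmat m i.divNat j

def colIdx (m : ℕ) (b : Fin 2) (u : Fin m) : Fin (2 * m) :=
  ⟨b.val * m + u.val, by
    have h1 : b.val ≤ 1 := Nat.lt_succ_iff.mp b.isLt
    have h2 : b.val * m ≤ 1 * m := Nat.mul_le_mul_right m h1
    have h3 := u.isLt
    omega⟩

lemma coe_colIdx (m : ℕ) (b : Fin 2) (u : Fin m) :
    ((colIdx m b u : Fin (2 * m)) : ℕ) = b.val * m + u.val := rfl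

lemma divNat_colIdx (m : ℕ) (b : Fin 2) (u : Fin m) : (colIdx m b u).divNat = b := by
  have hm : 0 < m := u.pos
  apply Fin.ext
  show (b.val * m + u.val) / m = b.val
  rw [Nat.add_comm, Nat.add_mul_div_right _ _ hm, Nat.div_eq_of_lt u.isLt, Nat.zero_add]

lemma modNat_colIdx (m : ℕ) (b : Fin 2) (u : Fin m) : (colIdx m b u).modNat = u := by
  apply Fin.ext
  show (b.val * m + u.val) % m = u.val
  rw [Nat.add_comm, Nat.add_mul_mod_self_right, Nat.mod_eq_of_lt u.isLt]

lemma colIdx_divNat_modNat (m : ℕ) (i : Fin (2 * m)) :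
    colIdx m i.divNat i.modNat = i := by
  apply Fin.ext
  show ((i : ℕ) / m) * m + (i : ℕ) % m = (i : ℕ)
  rw [Nat.mul_comm]
  exact Nat.div_add_mod _ m

def ee (m : ℕ) (u : Fin m) : ℕ := (-(u.val : ZMod m)).val

lemma ord_col0 (m : ℕ) (u : Fin m) :
    dihedralOrd m (colIdx m 0 u) = DihedralGroup.r (u.val : ZMod m) := by
  have h : ((colIdx m 0 u : Fin (2 * m)) : ℕ) = u.val := by
    rw [coe_colIdx]; simp
  rw [dihedralOrd, h, if_pos u.isLt]

lemma ord_col1 (m : ℕ) (u : Fin m) :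
    dihedralOrd m (colIdx m 1 u) = DihedralGroup.sr (u.val : ZMod m) := by
  have h : ((colIdx m 1 u : Fin (2 * m)) : ℕ) = m + u.val := by
    rw [coe_colIdx]; simp [Nat.one_mul]
  rw [dihedralOrd, h, if_neg (by omega), Nat.add_sub_cancel_left]

lemma X00 (m : ℕ) (u : Fin m) : Xmat m 0 (colIdx m 0 u) = X ^ (ee m u) := by
  show dihedralSpec m ((![1, DihedralGroup.sr 0] 0) * (dihedralOrd m (colIdx m 0 u))⁻¹) = _
  rw [ord_col0]
  have h1 : (![1, DihedralGroup.sr 0] (0 : Fin 2)) = (1 : DihedralGroup m) := rfl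
  have h2 : (DihedralGroup.r (u.val : ZMod m))⁻¹ = DihedralGroup.r (-(u.val : ZMod m)) := rfl
  rw [h1, h2, one_mul]
  rfl

lemma X10 (m : ℕ) (u : Fin m) : Xmat m 1 (colIdx m 0 u) = X ^ (m + ee m u) := by
  show dihedralSpec m ((![1, DihedralGroup.sr 0] 1) * (dihedralOrd m (colIdx m 0 u))⁻¹) = _
  rw [ord_col0]
  have h1 : (![1, DihedralGroup.sr 0] (1 : Fin 2)) = (DihedralGroup.sr 0 : DihedralGroup m) := rfl
  have h2 : (DihedralGroup.r (u.val : ZMod m))⁻¹ = DihedralGroup.r (-(u.val : ZMod m)) := rfl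
  rw [h1, h2, DihedralGroup.sr_mul_r, zero_add]
  rfl

lemma X01 (m : ℕ) (v : Fin m) : Xmat m 0 (colIdx m 1 v) = X ^ (m + v.val) := by
  show dihedralSpec m ((![1, DihedralGroup.sr 0] 0) * (dihedralOrd m (colIdx m 1 v))⁻¹) = _
  rw [ord_col1]
  have h1 : (![1, DihedralGroup.sr 0] (0 : Fin 2)) = (1 : DihedralGroup m) := rfl
  have h2 : (DihedralGroup.sr (v.val : ZMod m))⁻¹ = DihedralGroup.sr (v.val : ZMod m) := rfl
  rw [h1, h2, one_mul]
  show X ^ (m + ((v.val : ZMod m)).val) = X ^ (m + v.val)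
  rw [ZMod.val_cast_of_lt v.isLt]

lemma X11 (m : ℕ) (v : Fin m) : Xmat m 1 (colIdx m 1 v) = X ^ (v.val) := by
  show dihedralSpec m ((![1, DihedralGroup.sr 0] 1) * (dihedralOrd m (colIdx m 1 v))⁻¹) = _
  rw [ord_col1]
  have h1 : (![1, DihedralGroup.sr 0] (1 : Fin 2)) = (DihedralGroup.sr 0 : DihedralGroup m) := rfl
  have h2 : (DihedralGroup.sr (v.val : ZMod m))⁻¹ = DihedralGroup.sr (v.val : ZMod m) := rfl
  rw [h1, h2, DihedralGroup.sr_mul_sr, sub_zero]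
  show X ^ ((v.val : ZMod m)).val = X ^ v.val
  rw [ZMod.val_cast_of_lt v.isLt]

lemma sum_ee (m : ℕ) (hm : 0 < m) : ∑ u : Fin m, ee m u = ∑ u : Fin m, u.val := by
  haveI : NeZero m := ⟨hm.ne'⟩
  set φ : Fin m → Fin m := fun u => ⟨ee m u, ZMod.val_lt _⟩ with hφ
  have hval : ∀ u, ee m (φ u) = u.val := by
    intro u
    show (-(((-(u.val : ZMod m)).val : ℕ) : ZMod m)).val = u.val
    rw [ZMod.natCast_rightInverse _, neg_neg, ZMod.val_cast_of_lt u.isLt]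
  have hinv : Function.Involutive φ := by
    intro u
    apply Fin.ext
    show ee m (φ u) = u.val
    exact hval u
  have := Equiv.sum_comp (hinv.toPerm φ) (fun w : Fin m => (w : ℕ))
  simp only [Function.Involutive.coe_toPerm] at this
  calc ∑ u : Fin m, ee m u = ∑ u : Fin m, ((φ u : Fin m) : ℕ) := rfl
    _ = ∑ u : Fin m, (u : ℕ) := this

lemma sum_exponent (m : ℕ) (hm : 0 < m) :
    (∑ u : Fin m, ee m u) + (∑ v : Fin m, (v : ℕ)) = m * (m - 1) := by
  rw [sum_ee m hm]
  have h1 := Finset.sum_range_id_mul_two m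
  have h2 : ∑ v : Fin m, (v : ℕ) = ∑ i ∈ Finset.range m, i :=
    Fin.sum_univ_eq_sum_range (fun i => i) m
  rw [h2]
  omega
noncomputable def Zmat (m : ℕ) (κ : Fin (2 * m) → Fin m) :
    Matrix (Fin (2 * m)) (Fin (2 * m)) (Polynomial ℂ) :=
  Matrix.of fun i j : Fin (2 * m) => if κ i = κ j then Ymat m i j else 0

def Jmap (m : ℕ) (pq : Equiv.Perm (Fin m) × Equiv.Perm (Fin m)) :
    Fin (2 * m) → Fin m :=
  fun i => ![pq.1, pq.2] i.divNat i.modNat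

lemma Jmap_colIdx (m : ℕ) (pq : Equiv.Perm (Fin m) × Equiv.Perm (Fin m)) (b : Fin 2) (u : Fin m) :
    Jmap m pq (colIdx m b u) = ![pq.1, pq.2] b u := by
  unfold Jmap
  rw [divNat_colIdx, modNat_colIdx]

lemma fin2_cases (b : Fin 2) : b = 0 ∨ b = 1 := by
  fin_cases b <;> simp

lemma det_Zmat_good (m : ℕ) (hm : 0 < m) (p q : Equiv.Perm (Fin m)) :
    (Zmat m (Jmap m (p, q))).det
      = Polynomial.X ^ (m * (m - 1)) * (1 - Polynomial.X ^ (2 * m)) ^ m := by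
  haveI : NeZero m := ⟨hm.ne'⟩
  set J : Fin (2 * m) → Fin m := Jmap m (p, q) with hJ
  have hbij : Function.Bijective (fun i : Fin (2 * m) => (i.divNat, J i)) := by
    rw [Fintype.bijective_iff_injective_and_card]
    constructor
    · intro i j hij
      have h1 : i.divNat = j.divNat := congrArg Prod.fst hij
      have h2 : J i = J j := congrArg Prod.snd hij
      have h3 : (![p, q] i.divNat) i.modNat = (![p, q] j.divNat) j.modNat := h2
      rw [← h1] at h3
      have h4 : i.modNat = j.modNat := (![p, q] i.divNat).injective h3
      rw [← colIdx_divNat_modNat m i, ← colIdx_divNat_modNat m j, h1, h4]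
    · simp
  set e : Fin (2 * m) ≃ (Fin 2 × Fin m) :=
    Equiv.ofBijective (fun i : Fin (2 * m) => (i.divNat, J i)) hbij with he
  set Mb : Fin m → Matrix (Fin 2) (Fin 2) (Polynomial ℂ) :=
    fun c => Matrix.of fun r r' : Fin 2 =>
      Xmat m r (colIdx m r' ((![p, q] r')⁻¹ c)) with hMb
  have hZ : Zmat m J = (Matrix.blockDiagonal Mb).submatrix e e := by
    apply Matrix.ext
    intro i j
    rw [Matrix.submatrix_apply, Matrix.blockDiagonal_apply]
    show (if J i = J j then Ymat m i j else 0)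
      = if J i = J j then Mb (J i) i.divNat j.divNat else 0
    by_cases hij : J i = J j
    · rw [if_pos hij, if_pos hij]
      show Xmat m i.divNat j = Xmat m i.divNat (colIdx m j.divNat ((![p, q] j.divNat)⁻¹ (J i)))
      rw [hij]
      have hJj : J j = (![p, q] j.divNat) j.modNat := rfl
      rw [hJj, Equiv.Perm.coe_inv, Equiv.symm_apply_apply, colIdx_divNat_modNat]
    · rw [if_neg hij, if_neg hij]
  rw [hZ, Matrix.det_submatrix_equiv_self, Matrix.det_blockDiagonal]
  have hdet : ∀ c : Fin m, (Mb c).det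
      = Polynomial.X ^ (ee m (p⁻¹ c) + ((q⁻¹ c : Fin m) : ℕ)) * (1 - Polynomial.X ^ (2 * m)) := by
    intro c
    rw [Matrix.det_fin_two]
    have e00 : Mb c 0 0 = Polynomial.X ^ (ee m (p⁻¹ c)) := by
      show Xmat m 0 (colIdx m 0 ((![p, q] (0 : Fin 2))⁻¹ c)) = _
      have : (![p, q] (0 : Fin 2)) = p := rfl
      rw [this, X00]
    have e11 : Mb c 1 1 = Polynomial.X ^ ((q⁻¹ c : Fin m) : ℕ) := by
      show Xmat m 1 (colIdx m 1 ((![p, q] (1 : Fin 2))⁻¹ c)) = _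
      have : (![p, q] (1 : Fin 2)) = q := rfl
      rw [this, X11]
    have e01 : Mb c 0 1 = Polynomial.X ^ (m + ((q⁻¹ c : Fin m) : ℕ)) := by
      show Xmat m 0 (colIdx m 1 ((![p, q] (1 : Fin 2))⁻¹ c)) = _
      have : (![p, q] (1 : Fin 2)) = q := rfl
      rw [this, X01]
    have e10 : Mb c 1 0 = Polynomial.X ^ (m + ee m (p⁻¹ c)) := by
      show Xmat m 1 (colIdx m 0 ((![p, q] (0 : Fin 2))⁻¹ c)) = _
      have : (![p, q] (0 : Fin 2)) = p := rfl
      rw [this, X10]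
    rw [e00, e11, e01, e10, ← pow_add, ← pow_add]
    have hexp : m + ((q⁻¹ c : Fin m) : ℕ) + (m + ee m (p⁻¹ c))
        = (ee m (p⁻¹ c) + ((q⁻¹ c : Fin m) : ℕ)) + 2 * m := by ring
    rw [hexp, pow_add]
    ring
  rw [Finset.prod_congr rfl (fun c _ => hdet c), Finset.prod_mul_distrib, Finset.prod_const,
    Finset.prod_pow_eq_pow_sum]
  have hsum : ∑ c : Fin m, (ee m (p⁻¹ c) + ((q⁻¹ c : Fin m) : ℕ)) = m * (m - 1) := by
    rw [Finset.sum_add_distrib]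
    rw [Equiv.sum_comp (p⁻¹ : Equiv.Perm (Fin m)) (fun u : Fin m => ee m u)]
    rw [Equiv.sum_comp (q⁻¹ : Equiv.Perm (Fin m)) (fun v : Fin m => ((v : Fin m) : ℕ))]
    exact sum_exponent m hm
  rw [hsum]
  congr 1
  simp

lemma det_Zmat_bad (m : ℕ) (κ : Fin (2 * m) → Fin m) (b : Fin 2) (u u' : Fin m)
    (hne : u ≠ u') (hκ : κ (colIdx m b u) = κ (colIdx m b u')) :
    (Zmat m κ).det = 0 := by
  apply Matrix.det_zero_of_row_eq (i := colIdx m b u) (j := colIdx m b u')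
  · intro h
    apply hne
    have := congrArg Fin.modNat h
    rwa [modNat_colIdx, modNat_colIdx] at this
  · funext l
    show (if κ (colIdx m b u) = κ l then Ymat m (colIdx m b u) l else 0)
      = (if κ (colIdx m b u') = κ l then Ymat m (colIdx m b u') l else 0)
    have hY : Ymat m (colIdx m b u) l = Ymat m (colIdx m b u') l := by
      show Xmat m (colIdx m b u).divNat l = Xmat m (colIdx m b u').divNat l
      rw [divNat_colIdx, divNat_colIdx]
    rw [hκ, hY]

lemma exists_Jmap_of_inj (m : ℕ) (κ : Fin (2 * m) → Fin m)
    (h0 : Function.Injective (fun u : Fin m => κ (colIdx m 0 u)))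
    (h1 : Function.Injective (fun u : Fin m => κ (colIdx m 1 u))) :
    ∃ pq : Equiv.Perm (Fin m) × Equiv.Perm (Fin m), Jmap m pq = κ := by
  have hb0 := Finite.injective_iff_bijective.mp h0
  have hb1 := Finite.injective_iff_bijective.mp h1
  refine ⟨(Equiv.ofBijective _ hb0, Equiv.ofBijective _ hb1), ?_⟩
  funext i
  show (![Equiv.ofBijective _ hb0, Equiv.ofBijective _ hb1] i.divNat) i.modNat = κ i
  rcases fin2_cases i.divNat with hb | hb
  · rw [hb]
    show (Equiv.ofBijective _ hb0) i.modNat = κ i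
    rw [Equiv.ofBijective_apply]
    show κ (colIdx m 0 i.modNat) = κ i
    conv_rhs => rw [← colIdx_divNat_modNat m i]
    rw [hb]
  · rw [hb]
    show (Equiv.ofBijective _ hb1) i.modNat = κ i
    rw [Equiv.ofBijective_apply]
    show κ (colIdx m 1 i.modNat) = κ i
    conv_rhs => rw [← colIdx_divNat_modNat m i]
    rw [hb]

lemma Jmap_injective (m : ℕ) : Function.Injective (Jmap m) := by
  intro pq pq' h
  have h0 : ∀ u, pq.1 u = pq'.1 u := by
    intro u
    have := congrFun h (colIdx m 0 u)
    rwa [Jmap_colIdx, Jmap_colIdx] at this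
  have h1 : ∀ u, pq.2 u = pq'.2 u := by
    intro u
    have := congrFun h (colIdx m 1 u)
    rwa [Jmap_colIdx, Jmap_colIdx] at this
  have : pq.1 = pq'.1 := Equiv.ext h0
  have h2 : pq.2 = pq'.2 := Equiv.ext h1
  exact Prod.ext this h2

lemma sum_det_Zmat (m : ℕ) (hm : 0 < m) :
    ∑ κ : Fin (2 * m) → Fin m, (Zmat m κ).det
      = (m.factorial * m.factorial : ℕ) •
        (Polynomial.X ^ (m * (m - 1)) * (1 - Polynomial.X ^ (2 * m)) ^ m) := by
  have himg : ∑ κ ∈ Finset.image (Jmap m) Finset.univ, (Zmat m κ).det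
      = ∑ κ : Fin (2 * m) → Fin m, (Zmat m κ).det := by
    apply Finset.sum_subset (Finset.subset_univ _)
    intro κ _ hκ
    have hnex : ¬ ∃ pq, Jmap m pq = κ := by
      intro ⟨pq, hpq⟩
      exact hκ (Finset.mem_image.mpr ⟨pq, Finset.mem_univ pq, hpq⟩)
    by_cases h0 : Function.Injective (fun u : Fin m => κ (colIdx m 0 u))
    · by_cases h1 : Function.Injective (fun u : Fin m => κ (colIdx m 1 u))
      · exact absurd (exists_Jmap_of_inj m κ h0 h1) hnex
      · rw [Function.not_injective_iff] at h1
        obtain ⟨u, u', hκ', hne⟩ := h1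
        exact det_Zmat_bad m κ 1 u u' hne hκ'
    · rw [Function.not_injective_iff] at h0
      obtain ⟨u, u', hκ', hne⟩ := h0
      exact det_Zmat_bad m κ 0 u u' hne hκ'
  rw [← himg]
  rw [Finset.sum_image (fun x _ y _ h => Jmap_injective m h)]
  have hconst : ∀ pq : Equiv.Perm (Fin m) × Equiv.Perm (Fin m),
      (Zmat m (Jmap m pq)).det
        = Polynomial.X ^ (m * (m - 1)) * (1 - Polynomial.X ^ (2 * m)) ^ m := by
    intro ⟨p, q⟩
    exact det_Zmat_good m hm p q
  rw [Finset.sum_congr rfl (fun pq _ => hconst pq), Finset.sum_const]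
  congr 1
  simp [Fintype.card_perm]
end Aux

set_option maxHeartbeats 1000000 in
/-- Θ(D_m, ⟨τ⟩) with the standard ordering and principal specialization:
wrdet_m(f(h_i g_j⁻¹)) = (m!/m^m)² · q^{m(m−1)} · (1 − q^{2m})^m,
where H = ⟨τ⟩ = {e, τ} with rows ordered (e, τ). -/
theorem wrdet_dihedral_reflection (m : ℕ) (hm : 0 < m) :
    wrdet m (Matrix.of fun (i : Fin 2) (j : Fin (2 * m)) =>
        dihedralSpec m ((![1, DihedralGroup.sr 0] i) * (dihedralOrd m j)⁻¹))
      = Polynomial.C (((m.factorial : ℂ) / (m : ℂ) ^ m) ^ 2)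
        * Polynomial.X ^ (m * (m - 1)) * (1 - Polynomial.X ^ (2 * m)) ^ m := by
  haveI : NeZero m := ⟨hm.ne'⟩
  show wrdet m (Xmat m) = _
  have hwr : wrdet m (Xmat m) = ∑ σ : Equiv.Perm (Fin (2 * m)),
      algebraMap ℚ (Polynomial ℂ) ((-(1 : ℚ) / m) ^ nuPerm σ) * ∏ i, Ymat m (σ i) i := rfl
  have hmQ : (m : ℚ) ≠ 0 := Nat.cast_ne_zero.mpr hm.ne'
  have hscalar : ∀ σ : Equiv.Perm (Fin (2 * m)),
      ((-(1 : ℚ) / m) ^ nuPerm σ) * (m : ℚ) ^ (2 * m)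
        = ((Equiv.Perm.sign σ : ℤ) : ℚ) * (m : ℚ) ^ (cycleCount σ) := by
    intro σ
    have hc := cycleCount_le σ
    have hν : nuPerm σ + cycleCount σ = 2 * m := by
      have h1 : nuPerm σ = 2 * m - cycleCount σ := rfl
      omega
    calc ((-(1 : ℚ) / m) ^ nuPerm σ) * (m : ℚ) ^ (2 * m)
        = (-(1 : ℚ) / m) ^ nuPerm σ * ((m : ℚ) ^ nuPerm σ * (m : ℚ) ^ cycleCount σ) := by
          rw [← pow_add, hν]
      _ = ((-(1 : ℚ) / m) * m) ^ nuPerm σ * (m : ℚ) ^ cycleCount σ := by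
          rw [mul_pow]; ring
      _ = (-1 : ℚ) ^ nuPerm σ * (m : ℚ) ^ cycleCount σ := by
          rw [div_mul_cancel₀ _ hmQ]
      _ = ((Equiv.Perm.sign σ : ℤ) : ℚ) * (m : ℚ) ^ cycleCount σ := by
          rw [sign_cast_eq]
  have key : wrdet m (Xmat m) * ((m : Polynomial ℂ)) ^ (2 * m)
      = ((m.factorial * m.factorial : ℕ) : Polynomial ℂ) *
        (Polynomial.X ^ (m * (m - 1)) * (1 - Polynomial.X ^ (2 * m)) ^ m) := by
    rw [hwr, Finset.sum_mul]
    have hterm : ∀ σ : Equiv.Perm (Fin (2 * m)),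
        algebraMap ℚ (Polynomial ℂ) ((-(1 : ℚ) / m) ^ nuPerm σ) * (∏ i, Ymat m (σ i) i)
            * ((m : Polynomial ℂ)) ^ (2 * m)
          = ∑ κ : Fin (2 * m) → Fin m, (if κ ∘ σ = κ then
              ((Equiv.Perm.sign σ : ℤ) : Polynomial ℂ) * ∏ i, Ymat m (σ i) i else 0) := by
      intro σ
      have hmap : algebraMap ℚ (Polynomial ℂ) ((-(1 : ℚ) / m) ^ nuPerm σ)
            * ((m : Polynomial ℂ)) ^ (2 * m)
          = ((Equiv.Perm.sign σ : ℤ) : Polynomial ℂ) * ((m : Polynomial ℂ)) ^ (cycleCount σ) := by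
        have h1 : ((m : Polynomial ℂ)) ^ (2 * m)
            = algebraMap ℚ (Polynomial ℂ) ((m : ℚ) ^ (2 * m)) := by
          rw [map_pow, map_natCast]
        have h2 : ((m : Polynomial ℂ)) ^ (cycleCount σ)
            = algebraMap ℚ (Polynomial ℂ) ((m : ℚ) ^ (cycleCount σ)) := by
          rw [map_pow, map_natCast]
        rw [h1, h2, ← map_mul, hscalar σ, map_mul, map_intCast]
      have hcount : ((m : Polynomial ℂ)) ^ (cycleCount σ)
          = (((Finset.univ.filter fun κ : Fin (2 * m) → Fin m => κ ∘ σ = κ).card : ℕ)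
            : Polynomial ℂ) := by
        rw [card_inv_eq σ]
        push_cast
        ring
      rw [mul_right_comm, hmap, mul_assoc, hcount, ← Finset.sum_filter, Finset.sum_const,
        nsmul_eq_mul]
      ring
    rw [Finset.sum_congr rfl (fun σ _ => hterm σ), Finset.sum_comm]
    have hdet : ∀ κ : Fin (2 * m) → Fin m,
        (∑ σ : Equiv.Perm (Fin (2 * m)), if κ ∘ σ = κ then
          ((Equiv.Perm.sign σ : ℤ) : Polynomial ℂ) * ∏ i, Ymat m (σ i) i else 0)
        = (Zmat m κ).det := by
      intro κ
      rw [Matrix.det_apply']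
      apply Finset.sum_congr rfl
      intro σ _
      have hprod : ∏ i, Zmat m κ (σ i) i
          = if κ ∘ σ = κ then ∏ i, Ymat m (σ i) i else 0 := by
        by_cases h : κ ∘ σ = κ
        · rw [if_pos h]
          apply Finset.prod_congr rfl
          intro i _
          show (if κ (σ i) = κ i then Ymat m (σ i) i else 0) = Ymat m (σ i) i
          have hi2 : κ (σ i) = κ i := congrFun h i
          rw [if_pos hi2]
        · rw [if_neg h]
          have hex : ∃ i, κ (σ i) ≠ κ i := by
            by_contra hc
            push_neg at hc
            exact h (funext hc)
          obtain ⟨i, hi⟩ := hex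
          apply Finset.prod_eq_zero (Finset.mem_univ i)
          show (if κ (σ i) = κ i then Ymat m (σ i) i else 0) = 0
          rw [if_neg hi]
      rw [hprod]
      by_cases h : κ ∘ σ = κ
      · rw [if_pos h, if_pos h]
      · rw [if_neg h, if_neg h, mul_zero]
    rw [Finset.sum_congr rfl (fun κ _ => hdet κ), sum_det_Zmat m hm, nsmul_eq_mul]
  have hmC : ((m : ℂ)) ≠ 0 := Nat.cast_ne_zero.mpr hm.ne'
  have hne : ((m : Polynomial ℂ)) ^ (2 * m) ≠ 0 := by
    apply pow_ne_zero
    exact_mod_cast Nat.cast_ne_zero.mpr hm.ne'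
  apply mul_right_cancel₀ hne
  rw [key]
  have hC : ((m.factorial * m.factorial : ℕ) : Polynomial ℂ)
      = Polynomial.C (((m.factorial : ℂ) / (m : ℂ) ^ m) ^ 2)
        * ((m : Polynomial ℂ)) ^ (2 * m) := by
    have hval : ((m.factorial * m.factorial : ℕ) : ℂ)
        = ((m.factorial : ℂ) / (m : ℂ) ^ m) ^ 2 * ((m : ℂ)) ^ (2 * m) := by
      rw [div_pow, ← pow_mul, show m * 2 = 2 * m from mul_comm m 2,
        div_mul_cancel₀ _ (pow_ne_zero _ hmC)]
      push_cast
      ring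
    calc ((m.factorial * m.factorial : ℕ) : Polynomial ℂ)
        = Polynomial.C (((m.factorial * m.factorial : ℕ) : ℂ)) := by
          rw [Polynomial.C_eq_natCast]
      _ = Polynomial.C (((m.factorial : ℂ) / (m : ℂ) ^ m) ^ 2 * ((m : ℂ)) ^ (2 * m)) := by
          rw [hval]
      _ = Polynomial.C (((m.factorial : ℂ) / (m : ℂ) ^ m) ^ 2)
            * Polynomial.C (((m : ℂ)) ^ (2 * m)) := by rw [map_mul]
      _ = Polynomial.C (((m.factorial : ℂ) / (m : ℂ) ^ m) ^ 2)
            * ((m : Polynomial ℂ)) ^ (2 * m) := by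
          have hcp : Polynomial.C (((m : ℂ)) ^ (2 * m)) = ((m : Polynomial ℂ)) ^ (2 * m) := by
            rw [map_pow, Polynomial.C_eq_natCast]
          rw [hcp]
  rw [hC]
  ring
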